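/- The connectivity probability of the Erdős–Rényi random graph satisfies p_{n+1} ≥ (1 - q^n) p_n for all n ≥ 0, where q = 1-p. -/

import Mathlib

open Classical Finset

noncomputable section

/-- Probability that `G(n,p)` equals a given graph `g`. -/
def graphProb {n : ℕ} (p : ℝ) (g : SimpleGraph (Fin n)) : ℝ :=
  p ^ g.edgeSet.ncard * (1 - p) ^ (n.choose 2 - g.edgeSet.ncard)

/-- Probability that `G(n,p)` satisfies the predicate `P`. -/
def probEvent (n : ℕ) (p : ℝ) (P : SimpleGraph (Fin n) → Prop) : ℝ :=
  ∑ g : SimpleGraph (Fin n), if P g then graphProb p g else 0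

/-- Number of connected components. -/
def numComp {n : ℕ} (g : SimpleGraph (Fin n)) : ℕ := Nat.card g.ConnectedComponent

/-- Probability that `G(n,p)` is connected. -/
def connProb (n : ℕ) (p : ℝ) : ℝ := probEvent n p (fun g => g.Connected)

/-- `E[(ν_n - 1)^{\underline s}]`. -/
def Efall (n : ℕ) (p : ℝ) (s : ℕ) : ℝ :=
  ∑ g : SimpleGraph (Fin n), ((numComp g - 1).descFactorial s : ℝ) * graphProb p g

/-- `E[(ν_n)^{\underline s}]`. -/
def EfallNu (n : ℕ) (p : ℝ) (s : ℕ) : ℝ :=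
  ∑ g : SimpleGraph (Fin n), ((numComp g).descFactorial s : ℝ) * graphProb p g

/-- Probability that `G(n,p)` has an isolated vertex. -/
def isolProb (n : ℕ) (p : ℝ) : ℝ :=
  probEvent n p (fun g => ∃ v, ∀ w, ¬ g.Adj v w)

variable {n : ℕ}

def extG (h : SimpleGraph (Fin n)) (S : Finset (Fin n)) : SimpleGraph (Fin (n+1)) where
  Adj v w := (∃ a b, h.Adj a b ∧ v = a.castSucc ∧ w = b.castSucc) ∨
    (v = Fin.last n ∧ ∃ b ∈ S, w = b.castSucc) ∨
    (w = Fin.last n ∧ ∃ a ∈ S, v = a.castSucc)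
  symm := by
    constructor
    rintro v w (⟨a, b, hab, rfl, rfl⟩ | ⟨rfl, b, hb, rfl⟩ | ⟨rfl, a, ha, rfl⟩)
    · exact Or.inl ⟨b, a, hab.symm, rfl, rfl⟩
    · exact Or.inr (Or.inr ⟨rfl, b, hb, rfl⟩)
    · exact Or.inr (Or.inl ⟨rfl, a, ha, rfl⟩)
  loopless := by
    constructor
    rintro v (⟨a, b, hab, rfl, h2⟩ | ⟨rfl, b, hb, h2⟩ | ⟨rfl, a, ha, h2⟩)
    · exact hab.ne (Fin.castSucc_injective n h2.symm).symm
    · exact (Fin.castSucc_lt_last b).ne' h2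
    · exact (Fin.castSucc_lt_last a).ne' h2

lemma extG_adj_cast (h : SimpleGraph (Fin n)) (S : Finset (Fin n)) (a b : Fin n) :
    (extG h S).Adj a.castSucc b.castSucc ↔ h.Adj a b := by
  constructor
  · rintro (⟨a', b', hab, ha, hb⟩ | ⟨hl, _⟩ | ⟨hl, _⟩)
    · rwa [Fin.castSucc_injective n ha, Fin.castSucc_injective n hb]
    · exact absurd hl (Fin.castSucc_lt_last a).ne
    · exact absurd hl (Fin.castSucc_lt_last b).ne
  · exact fun hab => Or.inl ⟨a, b, hab, rfl, rfl⟩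

lemma extG_adj_last (h : SimpleGraph (Fin n)) (S : Finset (Fin n)) (b : Fin n) :
    (extG h S).Adj (Fin.last n) b.castSucc ↔ b ∈ S := by
  constructor
  · rintro (⟨a', b', _, ha, _⟩ | ⟨_, b', hb', hb⟩ | ⟨hl, _⟩)
    · exact absurd ha (Fin.castSucc_lt_last a').ne'
    · rwa [Fin.castSucc_injective n hb]
    · exact absurd hl (Fin.castSucc_lt_last b).ne
  · exact fun hb => Or.inr (Or.inl ⟨rfl, b, hb, rfl⟩)

lemma extG_inj : Function.Injective
    (fun hs : SimpleGraph (Fin n) × Finset (Fin n) => extG hs.1 hs.2) := by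
  rintro ⟨h1, S1⟩ ⟨h2, S2⟩ he
  simp only at he
  simp only [Prod.mk.injEq]
  constructor
  · ext a b
    rw [← extG_adj_cast h1 S1, ← extG_adj_cast h2 S2, he]
  · ext b
    rw [← extG_adj_last h1 S1, ← extG_adj_last h2 S2, he]

lemma extG_edgeSet (h : SimpleGraph (Fin n)) (S : Finset (Fin n)) :
    (extG h S).edgeSet = Sym2.map Fin.castSucc '' h.edgeSet ∪
      (fun b : Fin n => s(Fin.last n, b.castSucc)) '' ↑S := by
  ext e
  induction e with
  | _ v w =>
    simp only [SimpleGraph.mem_edgeSet, Set.mem_union, Set.mem_image,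
      Finset.mem_coe]
    constructor
    · rintro (⟨a, b, hab, rfl, rfl⟩ | ⟨rfl, b, hb, rfl⟩ | ⟨rfl, a, ha, rfl⟩)
      · exact Or.inl ⟨s(a, b), hab, rfl⟩
      · exact Or.inr ⟨b, hb, rfl⟩
      · exact Or.inr ⟨a, ha, Sym2.eq_swap⟩
    · rintro (⟨e', he', heq⟩ | ⟨b, hb, heq⟩)
      · induction e' with
        | _ a b =>
          simp only [Sym2.map_pair_eq, Sym2.eq_iff] at heq
          rcases heq with ⟨rfl, rfl⟩ | ⟨rfl, rfl⟩
          · exact Or.inl ⟨a, b, he', rfl, rfl⟩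
          · exact Or.inl ⟨b, a, he'.symm, rfl, rfl⟩
      · rw [Sym2.eq_iff] at heq
        rcases heq with ⟨rfl, rfl⟩ | ⟨rfl, rfl⟩
        · exact Or.inr (Or.inl ⟨rfl, b, hb, rfl⟩)
        · exact Or.inr (Or.inr ⟨rfl, b, hb, rfl⟩)

lemma extG_ncard (h : SimpleGraph (Fin n)) (S : Finset (Fin n)) :
    (extG h S).edgeSet.ncard = h.edgeSet.ncard + S.card := by
  rw [extG_edgeSet]
  have hinj1 : Function.Injective (Sym2.map (Fin.castSucc : Fin n → Fin (n+1))) :=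
    Sym2.map.injective (Fin.castSucc_injective n)
  have hinj2 : Function.Injective (fun b : Fin n => s(Fin.last n, b.castSucc)) := by
    intro a b hab
    simp only [Sym2.eq_iff] at hab
    rcases hab with ⟨_, h2⟩ | ⟨h1, _⟩
    · exact Fin.castSucc_injective n h2
    · exact absurd h1 (Fin.castSucc_lt_last b).ne'
  have hdisj : Disjoint (Sym2.map Fin.castSucc '' h.edgeSet)
      ((fun b : Fin n => s(Fin.last n, b.castSucc)) '' ↑S) := by
    rw [Set.disjoint_left]
    rintro e ⟨e', _, rfl⟩ ⟨b, _, heq⟩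
    induction e' with
    | _ a c =>
      simp only [Sym2.map_pair_eq, Sym2.eq_iff] at heq
      rcases heq with ⟨h1, _⟩ | ⟨h1, _⟩ <;>
        exact absurd h1 (Fin.castSucc_lt_last _).ne'
  rw [Set.ncard_union_eq hdisj ((h.edgeSet.toFinite.image _))
    ((S.finite_toSet.image _)),
    Set.ncard_image_of_injective _ hinj1, Set.ncard_image_of_injective _ hinj2,
    Set.ncard_coe_finset]

lemma edge_ncard_le (g : SimpleGraph (Fin n)) : g.edgeSet.ncard ≤ n.choose 2 := by
  classical
  rw [← SimpleGraph.coe_edgeFinset, Set.ncard_coe_finset]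
  simpa using g.card_edgeFinset_le_card_choose_two

lemma card_le_n (S : Finset (Fin n)) : S.card ≤ n := by
  simpa using Finset.card_le_univ S

lemma graphProb_ext (p : ℝ) (h : SimpleGraph (Fin n)) (S : Finset (Fin n)) :
    graphProb p (extG h S) = graphProb p h * (p ^ S.card * (1 - p) ^ (n - S.card)) := by
  have hch : (n + 1).choose 2 = n.choose 2 + n := by
    rw [Nat.choose_succ_succ n 1, Nat.choose_one_right]; ring
  have he : h.edgeSet.ncard ≤ n.choose 2 := edge_ncard_le h
  have hs : S.card ≤ n := card_le_n S
  have hsub : (n + 1).choose 2 - (h.edgeSet.ncard + S.card) =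
      (n.choose 2 - h.edgeSet.ncard) + (n - S.card) := by omega
  rw [graphProb, graphProb, extG_ncard, hsub, pow_add, pow_add]
  ring

def extHom (h : SimpleGraph (Fin n)) (S : Finset (Fin n)) : h →g extG h S where
  toFun := Fin.castSucc
  map_rel' := fun hab => (extG_adj_cast h S _ _).2 hab

lemma extG_connected {h : SimpleGraph (Fin n)} {S : Finset (Fin n)}
    (hc : h.Connected) (hS : S.Nonempty) : (extG h S).Connected := by
  obtain ⟨s, hs⟩ := hS
  have hreach : ∀ x : Fin (n + 1), (extG h S).Reachable x (Fin.last n) := by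
    intro x
    induction x using Fin.lastCases with
    | last => exact SimpleGraph.Reachable.refl _
    | cast a =>
      refine ((hc.preconnected a s).map (extHom h S)).trans ?_
      exact (((extG_adj_last h S s).2 hs).symm : (extG h S).Adj _ _).reachable
  exact ⟨fun x y => (hreach x).trans (hreach y).symm⟩

lemma sum_subsets (p : ℝ) :
    ∑ S : Finset (Fin n), p ^ S.card * (1 - p) ^ (n - S.card) = 1 := by
  have key := Finset.prod_add (fun _ : Fin n => p) (fun _ : Fin n => 1 - p) Finset.univ
  simp only [Finset.prod_const, Finset.powerset_univ, Finset.card_univ,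
    Fintype.card_fin] at key
  have hc : ∀ t : Finset (Fin n), (Finset.univ \ t).card = n - t.card := by
    intro t
    rw [Finset.card_sdiff_of_subset (Finset.subset_univ t), Finset.card_univ, Fintype.card_fin]
  rw [show p + (1 - p) = 1 by ring, one_pow] at key
  refine Eq.trans ?_ key.symm
  exact Finset.sum_congr rfl fun t _ => by rw [hc t]

lemma graphProb_nonneg {p : ℝ} (hp0 : 0 ≤ p) (hp1 : p ≤ 1) (g : SimpleGraph (Fin n)) :
    0 ≤ graphProb p g :=
  mul_nonneg (pow_nonneg hp0 _) (pow_nonneg (by linarith) _)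

theorem connProb_succ_ge (p : ℝ) (hp0 : 0 ≤ p) (hp1 : p ≤ 1) (n : ℕ) :
    connProb (n + 1) p ≥ (1 - (1 - p) ^ n) * connProb n p := by
  classical
  set D : Finset (SimpleGraph (Fin n) × Finset (Fin n)) :=
    (Finset.univ.filter fun h : SimpleGraph (Fin n) => h.Connected) ×ˢ
      (Finset.univ.filter fun S : Finset (Fin n) => S.Nonempty) with hD
  set T : Finset (SimpleGraph (Fin (n + 1))) :=
    D.image (fun hs => extG hs.1 hs.2) with hT
  have memD : ∀ hs : SimpleGraph (Fin n) × Finset (Fin n), hs ∈ D →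
      hs.1.Connected ∧ hs.2.Nonempty := by
    intro hs h
    rw [hD, Finset.mem_product, Finset.mem_filter, Finset.mem_filter] at h
    exact ⟨h.1.2, h.2.2⟩
  have step1 : connProb (n + 1) p ≥
      ∑ g ∈ T, (if g.Connected then graphProb p g else 0) := by
    rw [ge_iff_le, connProb, probEvent]
    have hrw : (∑ g : SimpleGraph (Fin (n + 1)),
        @ite ℝ g.Connected (Classical.propDecidable _) (graphProb p g) 0) =
        ∑ g : SimpleGraph (Fin (n + 1)), if g.Connected then graphProb p g else 0 :=
      Finset.sum_congr rfl fun g _ => by by_cases hc : g.Connected <;> simp [hc]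
    rw [hrw]
    exact Finset.sum_le_sum_of_subset_of_nonneg (Finset.subset_univ T)
      (fun g _ _ => by
        split
        · exact graphProb_nonneg hp0 hp1 g
        · exact le_refl 0)
  have step2 : ∑ g ∈ T, (if g.Connected then graphProb p g else 0) =
      ∑ hs ∈ D, (if (extG hs.1 hs.2).Connected then graphProb p (extG hs.1 hs.2) else 0) := by
    rw [hT]
    exact Finset.sum_image fun x _ y _ hxy => extG_inj hxy
  have step3 : ∑ hs ∈ D, (if (extG hs.1 hs.2).Connected then graphProb p (extG hs.1 hs.2) else 0)
      = ∑ hs ∈ D, graphProb p hs.1 * (p ^ hs.2.card * (1 - p) ^ (n - hs.2.card)) := by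
    refine Finset.sum_congr rfl fun hs hhs => ?_
    obtain ⟨hc, hne⟩ := memD hs hhs
    rw [if_pos (extG_connected hc hne), graphProb_ext]
  have hSsum : ∑ S ∈ Finset.univ.filter (fun S : Finset (Fin n) => S.Nonempty),
      p ^ S.card * (1 - p) ^ (n - S.card) = 1 - (1 - p) ^ n := by
    have hf : Finset.univ.filter (fun S : Finset (Fin n) => S.Nonempty) =
        Finset.univ.erase ∅ := by
      ext S
      simp [Finset.nonempty_iff_ne_empty]
    rw [hf, Finset.sum_erase_eq_sub (Finset.mem_univ ∅), sum_subsets]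
    simp
  have step4 : ∑ hs ∈ D, graphProb p hs.1 * (p ^ hs.2.card * (1 - p) ^ (n - hs.2.card))
      = (1 - (1 - p) ^ n) * connProb n p := by
    rw [hD, Finset.sum_product]
    have : ∀ h ∈ Finset.univ.filter (fun h : SimpleGraph (Fin n) => h.Connected),
        ∑ S ∈ Finset.univ.filter (fun S : Finset (Fin n) => S.Nonempty),
          graphProb p h * (p ^ S.card * (1 - p) ^ (n - S.card)) =
          graphProb p h * (1 - (1 - p) ^ n) := by
      intro h _
      rw [← Finset.mul_sum, hSsum]
    rw [Finset.sum_congr rfl this]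
    have hconn : connProb n p =
        ∑ h ∈ Finset.univ.filter (fun h : SimpleGraph (Fin n) => h.Connected),
          graphProb p h := by
      rw [connProb, probEvent, Finset.sum_filter]
      exact Finset.sum_congr rfl fun a _ => by by_cases hca : a.Connected <;> simp [hca]
    rw [hconn, Finset.mul_sum]
    exact Finset.sum_congr rfl fun h _ => mul_comm _ _
  calc connProb (n + 1) p ≥ _ := step1
    _ = _ := step2
    _ = _ := step3
    _ = (1 - (1 - p) ^ n) * connProb n p := step4
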